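/- arXiv:1503.08084 — 4 statements merged into one kernel-verified Lean document; each statement's English description precedes it below -/
import Mathlib

section
/- Let V, W be real vector spaces, S ⊆ V, C the convex hull of S, and f : C → W convex-linear on S (i.e., f(Σ aᵢvᵢ) = Σ aᵢ f(vᵢ) for all convex combinations of elements vᵢ ∈ S). Then f has a unique extension to the affine hull of S that preserves affine combinations. -/
open Finset

/-- `f` is convex-linear on `S`: it sends convex combinations of elements of `S`
to the corresponding combinations of values. -/
def IsConvexLinearOn {V W : Type*} [AddCommGroup V] [Module ℝ V]
    [AddCommGroup W] [Module ℝ W] (S : Set V) (f : V → W) : Prop :=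
  ∀ (n : ℕ) (a : Fin n → ℝ) (v : Fin n → V),
    (∀ i, v i ∈ S) → (∀ i, 0 ≤ a i) → (∑ i, a i) = 1 →
      f (∑ i, a i • v i) = ∑ i, a i • f (v i)

/-- `g` preserves affine combinations of elements of `S`. -/
def IsAffineLinearOn {V W : Type*} [AddCommGroup V] [Module ℝ V]
    [AddCommGroup W] [Module ℝ W] (S : Set V) (g : V → W) : Prop :=
  ∀ (n : ℕ) (a : Fin n → ℝ) (v : Fin n → V),
    (∀ i, v i ∈ S) → (∑ i, a i) = 1 →
      g (∑ i, a i • v i) = ∑ i, a i • g (v i)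

section Aux
variable {V W : Type*} [AddCommGroup V] [Module ℝ V] [AddCommGroup W] [Module ℝ W]

private lemma append_smul_sum {n m : ℕ} (t : ℝ) (p : Fin n → ℝ) (q : Fin m → ℝ)
    (z : Fin (n + m) → W) :
    ∑ i, Fin.append (fun i => p i / t) (fun j => q j / t) i • z i
      = t⁻¹ • (∑ i, p i • z (Fin.castAdd m i) + ∑ j, q j • z (Fin.natAdd n j)) := by
  rw [Fin.sum_univ_add]
  simp only [Fin.append_left, Fin.append_right]
  rw [smul_add, Finset.smul_sum, Finset.smul_sum]
  congr 1 <;> (apply Finset.sum_congr rfl; intro i _; rw [smul_smul, div_eq_inv_mul])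

lemma key {S : Set V} {f : V → W} (hf : IsConvexLinearOn S f)
    {n m : ℕ} {a : Fin n → ℝ} {b : Fin m → ℝ} {v : Fin n → V} {w : Fin m → V}
    (hv : ∀ i, v i ∈ S) (hw : ∀ j, w j ∈ S)
    (ha : ∑ i, a i = 1) (hb : ∑ j, b j = 1)
    (heq : ∑ i, a i • v i = ∑ j, b j • w j) :
    ∑ i, a i • f (v i) = ∑ j, b j • f (w j) := by
  set ap : Fin n → ℝ := fun i => max (a i) 0 with hap
  set an : Fin n → ℝ := fun i => max (-a i) 0 with han
  set bp : Fin m → ℝ := fun j => max (b j) 0 with hbp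
  set bn : Fin m → ℝ := fun j => max (-b j) 0 with hbn
  have hsa : ∑ i, ap i - ∑ i, an i = 1 := by
    rw [← Finset.sum_sub_distrib]
    simpa [ap, an, max_zero_sub_eq_self] using ha
  have hsb : ∑ j, bp j - ∑ j, bn j = 1 := by
    rw [← Finset.sum_sub_distrib]
    simpa [bp, bn, max_zero_sub_eq_self] using hb
  set t : ℝ := ∑ i, ap i + ∑ j, bn j with ht
  have ht1 : (1:ℝ) ≤ t := by
    have h1 : (0:ℝ) ≤ ∑ i, an i := Finset.sum_nonneg fun i _ => le_max_right _ _
    have h2 : (0:ℝ) ≤ ∑ j, bn j := Finset.sum_nonneg fun j _ => le_max_right _ _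
    linarith
  have ht0 : t ≠ 0 := by linarith
  have htpos : (0:ℝ) < t := by linarith
  -- difference identities
  have h1 : ∑ i, ap i • v i - ∑ i, an i • v i = ∑ i, a i • v i := by
    rw [← Finset.sum_sub_distrib]
    apply Finset.sum_congr rfl; intro i _
    rw [← sub_smul]; simp [ap, an, max_zero_sub_eq_self]
  have h2 : ∑ j, bp j • w j - ∑ j, bn j • w j = ∑ j, b j • w j := by
    rw [← Finset.sum_sub_distrib]
    apply Finset.sum_congr rfl; intro j _
    rw [← sub_smul]; simp [bp, bn, max_zero_sub_eq_self]
  have h1f : ∑ i, ap i • f (v i) - ∑ i, an i • f (v i) = ∑ i, a i • f (v i) := by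
    rw [← Finset.sum_sub_distrib]
    apply Finset.sum_congr rfl; intro i _
    rw [← sub_smul]; simp [ap, an, max_zero_sub_eq_self]
  have h2f : ∑ j, bp j • f (w j) - ∑ j, bn j • f (w j) = ∑ j, b j • f (w j) := by
    rw [← Finset.sum_sub_distrib]
    apply Finset.sum_congr rfl; intro j _
    rw [← sub_smul]; simp [bp, bn, max_zero_sub_eq_self]
  -- point equality
  have hpt : ∑ i, ap i • v i + ∑ j, bn j • w j = ∑ i, an i • v i + ∑ j, bp j • w j := by
    have h3 : ∑ i, ap i • v i - ∑ i, an i • v i = ∑ j, bp j • w j - ∑ j, bn j • w j := by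
      rw [h1, h2, heq]
    rw [sub_eq_sub_iff_add_eq_add] at h3
    exact h3.trans (add_comm _ _)
  -- combined families
  set c1 : Fin (n + m) → ℝ := Fin.append (fun i => ap i / t) (fun j => bn j / t) with hc1
  set c2 : Fin (n + m) → ℝ := Fin.append (fun i => an i / t) (fun j => bp j / t) with hc2
  set u : Fin (n + m) → V := Fin.append v w with hu
  have hu_mem : ∀ i, u i ∈ S := by
    intro i
    refine Fin.addCases (fun i => ?_) (fun j => ?_) i <;>
      simp only [u, Fin.append_left, Fin.append_right]
    · exact hv i
    · exact hw j
  have hc1nn : ∀ i, 0 ≤ c1 i := by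
    intro i
    refine Fin.addCases (fun i => ?_) (fun j => ?_) i <;>
      simp only [c1, Fin.append_left, Fin.append_right] <;>
      exact div_nonneg (le_max_right _ _) (le_of_lt htpos)
  have hc2nn : ∀ i, 0 ≤ c2 i := by
    intro i
    refine Fin.addCases (fun i => ?_) (fun j => ?_) i <;>
      simp only [c2, Fin.append_left, Fin.append_right] <;>
      exact div_nonneg (le_max_right _ _) (le_of_lt htpos)
  have hc1sum : ∑ i, c1 i = 1 := by
    rw [hc1, Fin.sum_univ_add]
    simp only [Fin.append_left, Fin.append_right]
    rw [← Finset.sum_div, ← Finset.sum_div, ← add_div, div_eq_one_iff_eq ht0]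
  have hc2sum : ∑ i, c2 i = 1 := by
    rw [hc2, Fin.sum_univ_add]
    simp only [Fin.append_left, Fin.append_right]
    rw [← Finset.sum_div, ← Finset.sum_div, ← add_div, div_eq_one_iff_eq ht0]
    linarith
  have e1 := hf (n + m) c1 u hu_mem hc1nn hc1sum
  have e2 := hf (n + m) c2 u hu_mem hc2nn hc2sum
  have hxeq : ∑ i, c1 i • u i = ∑ i, c2 i • u i := by
    rw [hc1, hc2, append_smul_sum, append_smul_sum]
    simp only [hu, Fin.append_left, Fin.append_right, hpt]
  have eval : ∑ i, c1 i • f (u i) = ∑ i, c2 i • f (u i) := by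
    rw [← e1, ← e2, hxeq]
  have eval2 : t⁻¹ • (∑ i, ap i • f (v i) + ∑ j, bn j • f (w j))
      = t⁻¹ • (∑ i, an i • f (v i) + ∑ j, bp j • f (w j)) := by
    have l1 : ∑ i, c1 i • f (u i)
        = t⁻¹ • (∑ i, ap i • f (v i) + ∑ j, bn j • f (w j)) := by
      rw [hc1, append_smul_sum]
      simp only [hu, Fin.append_left, Fin.append_right]
    have l2 : ∑ i, c2 i • f (u i)
        = t⁻¹ • (∑ i, an i • f (v i) + ∑ j, bp j • f (w j)) := by
      rw [hc2, append_smul_sum]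
      simp only [hu, Fin.append_left, Fin.append_right]
    rw [← l1, ← l2, eval]
  have eval3 : ∑ i, ap i • f (v i) + ∑ j, bn j • f (w j)
      = ∑ i, an i • f (v i) + ∑ j, bp j • f (w j) :=
    smul_right_injective W (inv_ne_zero ht0) eval2
  rw [← h1f, ← h2f, sub_eq_sub_iff_add_eq_add]
  exact eval3.trans (add_comm _ _)


/-- `x` has an affine representation with points in `S`. -/
def HasRep (S : Set V) (x : V) : Prop :=
  ∃ n : ℕ, ∃ a : Fin n → ℝ, ∃ v : Fin n → V,
    (∀ i, v i ∈ S) ∧ ∑ i, a i = 1 ∧ ∑ i, a i • v i = x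

open Classical in
noncomputable def affExt (S : Set V) (f : V → W) (x : V) : W :=
  if h : HasRep S x then
    ∑ i, h.choose_spec.choose i • f (h.choose_spec.choose_spec.choose i)
  else f x

lemma affExt_eq {S : Set V} {f : V → W} (hf : IsConvexLinearOn S f)
    {n : ℕ} {a : Fin n → ℝ} {v : Fin n → V} {x : V}
    (hv : ∀ i, v i ∈ S) (ha : ∑ i, a i = 1) (hx : ∑ i, a i • v i = x) :
    affExt S f x = ∑ i, a i • f (v i) := by
  have h : HasRep S x := ⟨n, a, v, hv, ha, hx⟩
  rw [affExt, dif_pos h]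
  obtain ⟨h1, h2, h3⟩ := h.choose_spec.choose_spec.choose_spec
  exact key hf h1 hv h2 ha (h3.trans hx.symm)

lemma finset_sum_to_fin {ι γ : Type*} [AddCommMonoid γ] (t : Finset ι) (F : ι → γ) :
    ∑ i : Fin t.card, F (t.equivFin.symm i) = ∑ i ∈ t, F i := by
  rw [Equiv.sum_comp t.equivFin.symm (fun j : ↥t => F ↑j)]
  exact Finset.sum_coe_sort t F

lemma hasRep_of_mem_affineSpan {S : Set V} {x : V} (hx : x ∈ affineSpan ℝ S) :
    HasRep S x := by
  rw [← Subtype.range_coe (s := S)] at hx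
  obtain ⟨s, w, hw, hcomb⟩ := eq_affineCombination_of_mem_affineSpan hx
  rw [Finset.affineCombination_eq_linear_combination s _ w hw] at hcomb
  refine ⟨s.card, fun i => w (s.equivFin.symm i), fun i => ((s.equivFin.symm i : ↥S) : V),
    fun i => (s.equivFin.symm i : ↥S).2, ?_, ?_⟩
  · rw [finset_sum_to_fin s (fun j => w j)]; exact hw
  · rw [finset_sum_to_fin s (fun j => w j • (j : V))]; exact hcomb.symm

end Aux

/-- A function convex-linear on `S` (defined on the convex hull of `S`) has a
unique extension to the affine hull of `S` preserving affine combinations. -/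
theorem convexLinear_unique_affine_extension
    {V W : Type*} [AddCommGroup V] [Module ℝ V] [AddCommGroup W] [Module ℝ W]
    (S : Set V) (f : V → W) (hf : IsConvexLinearOn S f) :
    ∃ g : V → W, IsAffineLinearOn S g ∧
      (∀ x ∈ convexHull ℝ S, g x = f x) ∧
      ∀ g' : V → W, IsAffineLinearOn S g' → (∀ x ∈ convexHull ℝ S, g' x = f x) →
        ∀ x ∈ affineSpan ℝ S, g' x = g x := by
  have single : ∀ y ∈ S, affExt S f y = f y := by
    intro y hy
    rw [affExt_eq hf (n := 1) (a := fun _ => (1:ℝ)) (v := fun _ => y)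
      (fun _ => hy) (by simp) (by simp)]
    simp
  refine ⟨affExt S f, ?_, ?_, ?_⟩
  · intro n a v hv ha
    rw [affExt_eq hf hv ha rfl]
    exact Finset.sum_congr rfl fun i _ => by rw [single (v i) (hv i)]
  · intro x hx
    rw [_root_.convexHull_eq] at hx
    obtain ⟨ι, t, w, z, hw0, hw1, hz, hcm⟩ := hx
    rw [Finset.centerMass_eq_of_sum_1 t z hw1] at hcm
    have hsum : ∑ i : Fin t.card, w (t.equivFin.symm i) = 1 := by
      rw [finset_sum_to_fin t (fun j => w j)]; exact hw1
    have hpt : ∑ i : Fin t.card, w (t.equivFin.symm i) • z (t.equivFin.symm i) = x := by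
      rw [finset_sum_to_fin t (fun j => w j • z j)]; exact hcm
    have hmem : ∀ i, z ((t.equivFin.symm i : ↥t) : ι) ∈ S :=
      fun i => hz _ (t.equivFin.symm i).2
    rw [affExt_eq hf hmem hsum hpt, ← hpt,
      hf t.card _ _ hmem (fun i => hw0 _ (t.equivFin.symm i).2) hsum]
  · intro g' hg' hagree x hx
    obtain ⟨n, a, v, hv, ha, hptx⟩ := hasRep_of_mem_affineSpan hx
    rw [← hptx, hg' n a v hv ha, affExt_eq hf hv ha rfl]
    exact Finset.sum_congr rfl fun i _ => by
      rw [hagree (v i) (subset_convexHull ℝ S (hv i))]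
end

section
/- Let V, W be real vector spaces, S ⊆ V with convex hull C and affine hull A, and f : C → W convex-linear on S. Then there exist u₀ ∈ A, w₀ ∈ W, a linear subspace L ⊆ V with A = u₀ + L, and a linear map h : L → W such that f(v) = w₀ + h(v − u₀) for all v ∈ C. -/
open Finset

lemma hf_finset {V W : Type*} [AddCommGroup V] [Module ℝ V] [AddCommGroup W] [Module ℝ W]
    {S : Set V} {f : V → W} (hf : IsConvexLinearOn S f)
    {ι : Type*} (t : Finset ι) (w : ι → ℝ) (z : ι → V)
    (hz : ∀ i ∈ t, z i ∈ S) (hw : ∀ i ∈ t, 0 ≤ w i) (hw1 : ∑ i ∈ t, w i = 1) :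
    f (∑ i ∈ t, w i • z i) = ∑ i ∈ t, w i • f (z i) := by
  classical
  let e := t.equivFin
  have h1 : ∑ i : Fin t.card, w ((e.symm i : {x // x ∈ t}) : ι) • z ((e.symm i : {x // x ∈ t}) : ι)
      = ∑ i ∈ t, w i • z i := by
    rw [← Finset.sum_coe_sort t (fun i => w i • z i)]
    exact Fintype.sum_equiv e.symm _ _ (fun _ => rfl)
  have h2 : ∑ i : Fin t.card, w ((e.symm i : {x // x ∈ t}) : ι) = ∑ i ∈ t, w i := by
    rw [← Finset.sum_coe_sort t w]
    exact Fintype.sum_equiv e.symm _ _ (fun _ => rfl)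
  have h3 : ∑ i : Fin t.card, w ((e.symm i : {x // x ∈ t}) : ι) • f (z ((e.symm i : {x // x ∈ t}) : ι))
      = ∑ i ∈ t, w i • f (z i) := by
    rw [← Finset.sum_coe_sort t (fun i => w i • f (z i))]
    exact Fintype.sum_equiv e.symm _ _ (fun _ => rfl)
  have := hf t.card (fun i => w (e.symm i)) (fun i => z (e.symm i))
    (fun i => hz _ (e.symm i).2) (fun i => hw _ (e.symm i).2)
    (by beta_reduce; rw [h2]; exact hw1)
  beta_reduce at this
  rw [h1, h3] at this
  exact this

lemma comb_aux {V W : Type*} [AddCommGroup V] [Module ℝ V] [AddCommGroup W] [Module ℝ W]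
    {S : Set V} {f : V → W} (hf : IsConvexLinearOn S f) {u₀ : V} (hu₀ : u₀ ∈ S)
    (t : Finset S) (q : S → ℝ) (hq : ∀ s, 0 ≤ q s) {M : ℝ} (hM : 0 < M)
    (hQ : ∑ s ∈ t, q s ≤ M) :
    f (((M - ∑ s ∈ t, q s) / M) • u₀ + ∑ s ∈ t, (q s / M) • (s : V))
      = ((M - ∑ s ∈ t, q s) / M) • f u₀ + ∑ s ∈ t, (q s / M) • f s := by
  classical
  set Q := ∑ s ∈ t, q s with hQdef
  let t' : Finset (Option S) := insert none (t.map Function.Embedding.some)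
  let w : Option S → ℝ := fun o => o.elim ((M - Q) / M) (fun s => q s / M)
  let zf : Option S → V := fun o => o.elim u₀ (fun s => (s : V))
  have hnone : (none : Option S) ∉ t.map Function.Embedding.some := by simp
  have hz : ∀ i ∈ t', zf i ∈ S := by
    rintro (_|s) _
    · exact hu₀
    · exact s.2
  have hw : ∀ i ∈ t', 0 ≤ w i := by
    rintro (_|s) _
    · exact div_nonneg (sub_nonneg.2 hQ) hM.le
    · exact div_nonneg (hq s) hM.le
  have hw1 : ∑ i ∈ t', w i = 1 := by
    rw [Finset.sum_insert hnone, Finset.sum_map]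
    simp only [Function.Embedding.some_apply, w, Option.elim]
    rw [← Finset.sum_div, ← hQdef]
    field_simp
    ring
  have := hf_finset hf t' w zf hz hw hw1
  rw [Finset.sum_insert hnone, Finset.sum_map, Finset.sum_insert hnone, Finset.sum_map] at this
  simpa only [Function.Embedding.some_apply, w, zf, Option.elim] using this

lemma key_rel {V W : Type*} [AddCommGroup V] [Module ℝ V] [AddCommGroup W] [Module ℝ W]
    {S : Set V} {f : V → W} (hf : IsConvexLinearOn S f) {u₀ : V} (hu₀ : u₀ ∈ S)
    (t : Finset S) (l : S → ℝ)
    (hl : ∑ s ∈ t, l s • ((s : V) - u₀) = 0) :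
    ∑ s ∈ t, l s • (f s - f u₀) = 0 := by
  classical
  set P := ∑ s ∈ t, max (l s) 0 with hPdef
  set N := ∑ s ∈ t, max (-(l s)) 0 with hNdef
  set M := max P N with hMdef
  have hsub : ∀ s : S, max (l s) 0 - max (-(l s)) 0 = l s := by
    intro s
    rcases le_total (l s) 0 with h | h
    · rw [max_eq_right h, max_eq_left (neg_nonneg.2 h)]; ring
    · rw [max_eq_left h, max_eq_right (neg_nonpos.2 h)]; ring
  have hPNsum : P - N = ∑ s ∈ t, l s := by
    rw [hPdef, hNdef, ← Finset.sum_sub_distrib]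
    exact Finset.sum_congr rfl fun s _ => hsub s
  have hl' : ∑ s ∈ t, l s • (s : V) = (∑ s ∈ t, l s) • u₀ := by
    have h := hl
    simp only [smul_sub] at h
    rw [Finset.sum_sub_distrib, ← Finset.sum_smul] at h
    exact sub_eq_zero.mp h
  have hP0 : 0 ≤ P := Finset.sum_nonneg fun s _ => le_max_right _ _
  have hN0 : 0 ≤ N := Finset.sum_nonneg fun s _ => le_max_right _ _
  have hPM : P ≤ M := le_max_left _ _
  have hNM : N ≤ M := le_max_right _ _
  rcases eq_or_lt_of_le (le_max_of_le_left hP0 : (0:ℝ) ≤ M) with hM0 | hM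
  · -- M = 0, so all weights vanish
    have hP : P = 0 := le_antisymm (hM0 ▸ hPM) hP0
    have hterm : ∀ s ∈ t, max (l s) 0 = 0 :=
      (Finset.sum_eq_zero_iff_of_nonneg fun s _ => le_max_right _ _).mp hP
    have hN' : N = 0 := le_antisymm (hM0 ▸ hNM) hN0
    have hterm' : ∀ s ∈ t, max (-(l s)) 0 = 0 :=
      (Finset.sum_eq_zero_iff_of_nonneg fun s _ => le_max_right _ _).mp hN'
    refine Finset.sum_eq_zero fun s hs => ?_
    have : l s = 0 := by
      have h1 := hterm s hs; have h2 := hterm' s hs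
      have := hsub s; rw [h1, h2] at this; linarith
    rw [this, zero_smul]
  · have hMne : M ≠ 0 := hM.ne'
    have e1 := comb_aux hf hu₀ t (fun s => max (l s) 0) (fun s => le_max_right _ _) hM hPM
    have e2 := comb_aux hf hu₀ t (fun s => max (-(l s)) 0) (fun s => le_max_right _ _) hM hNM
    rw [← hPdef] at e1
    rw [← hNdef] at e2
    -- the two convex combinations are the same vector
    have hvec : ((M - P) / M) • u₀ + ∑ s ∈ t, (max (l s) 0 / M) • (s : V)
        = ((M - N) / M) • u₀ + ∑ s ∈ t, (max (-(l s)) 0 / M) • (s : V) := by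
      apply smul_right_injective V hMne
      simp only [smul_add, Finset.smul_sum, smul_smul, mul_div_cancel₀ _ hMne]
      have expand : ∀ s : S, max (l s) 0 • (s : V) = max (-(l s)) 0 • (s : V) + l s • (s : V) := by
        intro s
        rw [← add_smul]
        congr 1
        have := hsub s; linarith
      rw [Finset.sum_congr rfl (fun s _ => expand s), Finset.sum_add_distrib, hl', ← hPNsum]
      module
    have e3 : ((M - P) / M) • f u₀ + ∑ s ∈ t, (max (l s) 0 / M) • f s
        = ((M - N) / M) • f u₀ + ∑ s ∈ t, (max (-(l s)) 0 / M) • f s := by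
      rw [← e1, hvec, e2]
    have e4 : (M - P) • f u₀ + ∑ s ∈ t, max (l s) 0 • f s
        = (M - N) • f u₀ + ∑ s ∈ t, max (-(l s)) 0 • f s := by
      have := congrArg (fun x : W => M • x) e3
      simpa only [smul_add, Finset.smul_sum, smul_smul, mul_div_cancel₀ _ hMne] using this
    have e5 : ∑ s ∈ t, l s • f s = (∑ s ∈ t, l s) • f u₀ := by
      have expand : ∀ s : S, l s • f s = max (l s) 0 • f s - max (-(l s)) 0 • f s := by
        intro s; rw [← sub_smul, hsub s]
      rw [Finset.sum_congr rfl (fun s _ => expand s), Finset.sum_sub_distrib, ← hPNsum]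
      have key2 : (∑ s ∈ t, max (l s) 0 • f s) - ∑ s ∈ t, max (-(l s)) 0 • f s
          = (M - N) • f u₀ - (M - P) • f u₀ := by
        rw [sub_eq_sub_iff_add_eq_add, add_comm]; exact e4
      rw [key2, ← sub_smul]
      congr 1; ring
    simp only [smul_sub]
    rw [Finset.sum_sub_distrib, ← Finset.sum_smul, e5, sub_self]

/-- A function convex-linear on `S` is translated-linear on the convex hull `C`:
there are `u₀` in the affine hull `A` of `S`, `w₀ ∈ W`, a linear subspace `L`
with `A = u₀ + L`, and a linear map `h : L → W` with `f v = w₀ + h (v - u₀)`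
for all `v ∈ C`. -/
theorem convexLinear_translatedLinear
    {V W : Type*} [AddCommGroup V] [Module ℝ V] [AddCommGroup W] [Module ℝ W]
    (S : Set V) (f : V → W) (hf : IsConvexLinearOn S f) (hS : S.Nonempty) :
    ∃ (u₀ : V) (w₀ : W) (L : Submodule ℝ V) (h : L →ₗ[ℝ] W),
      u₀ ∈ affineSpan ℝ S ∧
      (affineSpan ℝ S : Set V) = (fun v => u₀ + v) '' (L : Set V) ∧
      ∀ v ∈ convexHull ℝ S, ∃ hv : v - u₀ ∈ L, f v = w₀ + h ⟨v - u₀, hv⟩ := by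
  classical
  obtain ⟨u₀, hu₀S⟩ := hS
  set T : (S →₀ ℝ) →ₗ[ℝ] V := Finsupp.linearCombination ℝ (fun s : S => (s : V) - u₀) with hTdef
  set G : (S →₀ ℝ) →ₗ[ℝ] W := Finsupp.linearCombination ℝ (fun s : S => f s - f u₀) with hGdef
  have hker : LinearMap.ker T ≤ LinearMap.ker G := by
    intro l hl
    rw [LinearMap.mem_ker, hTdef, Finsupp.linearCombination_apply, Finsupp.sum] at hl
    rw [LinearMap.mem_ker, hGdef, Finsupp.linearCombination_apply, Finsupp.sum]
    exact key_rel hf hu₀S l.support l hl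
  set L : Submodule ℝ V := LinearMap.range T with hLdef
  set h : L →ₗ[ℝ] W :=
    ((LinearMap.ker T).liftQ G hker).comp (LinearMap.quotKerEquivRange T).symm.toLinearMap
    with hhdef
  have happly : ∀ (l : S →₀ ℝ) (hm : T l ∈ L), h ⟨T l, hm⟩ = G l := by
    intro l hm
    have h1 : (⟨T l, hm⟩ : L) = (LinearMap.quotKerEquivRange T) (Submodule.Quotient.mk l) :=
      Subtype.ext (LinearMap.quotKerEquivRange_apply_mk T l).symm
    rw [hhdef, LinearMap.comp_apply, h1, LinearEquiv.coe_toLinearMap,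
      LinearEquiv.symm_apply_apply, Submodule.liftQ_apply]
  have hLspan : L = vectorSpan ℝ S := by
    rw [hLdef, hTdef, Finsupp.range_linearCombination,
      vectorSpan_eq_span_vsub_set_right ℝ hu₀S]
    congr 1
    rw [Set.image_eq_range]
    simp [vsub_eq_sub]
  have hu₀A : u₀ ∈ affineSpan ℝ S := subset_affineSpan ℝ S hu₀S
  refine ⟨u₀, f u₀, L, h, hu₀A, ?_, ?_⟩
  · ext x
    constructor
    · intro hx
      refine ⟨x - u₀, ?_, by module⟩
      rw [hLspan, ← direction_affineSpan]
      exact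
        (AffineSubspace.vsub_right_mem_direction_iff_mem hu₀A x).mpr hx
    · rintro ⟨y, hy, rfl⟩
      have : (u₀ + y) -ᵥ u₀ ∈ (affineSpan ℝ S).direction := by
        rw [direction_affineSpan, ← hLspan]
        simpa [vsub_eq_sub] using hy
      exact (AffineSubspace.vsub_right_mem_direction_iff_mem hu₀A _).mp this
  · intro v hv
    rw [_root_.convexHull_eq] at hv
    obtain ⟨ι, t, w, z, hw0, hw1, hzS, hx⟩ := hv
    rw [Finset.centerMass_eq_of_sum_1 _ _ hw1] at hx
    -- the finsupp representing v as a combination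
    set l : S →₀ ℝ := ∑ i ∈ t.attach, Finsupp.single (⟨z i.1, hzS i.1 i.2⟩ : S) (w i.1)
      with hldef
    have hTl : T l = v - u₀ := by
      rw [hldef, map_sum]
      simp only [hTdef, Finsupp.linearCombination_single]
      rw [Finset.sum_attach t (fun i => w i • (z i - u₀))]
      simp only [smul_sub]
      rw [Finset.sum_sub_distrib, ← Finset.sum_smul, hw1, one_smul, hx]
    have hGl : G l = f v - f u₀ := by
      have hfv : f v = ∑ i ∈ t, w i • f (z i) := by
        rw [← hx]; exact hf_finset hf t w z hzS hw0 hw1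
      rw [hldef, map_sum]
      simp only [hGdef, Finsupp.linearCombination_single]
      rw [Finset.sum_attach t (fun i => w i • (f (z i) - f u₀))]
      simp only [smul_sub]
      rw [Finset.sum_sub_distrib, ← Finset.sum_smul, hw1, one_smul, hfv]
    have hvL : v - u₀ ∈ L := by rw [← hTl]; exact ⟨l, rfl⟩
    refine ⟨hvL, ?_⟩
    have hcast : (⟨v - u₀, hvL⟩ : L) = ⟨T l, ⟨l, rfl⟩⟩ := Subtype.ext hTl.symm
    rw [hcast, happly l ⟨l, rfl⟩, hGl]
    abel
end

section
/- Let f : C → W be convex-linear on S where C = conv(S). If two affine combinations Σᵢ aᵢsᵢ and Σⱼ bⱼtⱼ of elements of S are equal as vectors (with Σᵢ aᵢ = Σⱼ bⱼ = 1), then Σᵢ aᵢ f(sᵢ) = Σⱼ bⱼ f(tⱼ). Equivalently, the affine hull of the graph of f restricted to S is the graph of a function. -/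
open Finset

/-- If two affine combinations of elements of `S` are equal as vectors, then the
corresponding combinations of values of a convex-linear `f` are equal; i.e. the
affine hull of the graph of `f` restricted to `S` is the graph of a function. -/
theorem convexLinear_affineCombination_welldefined
    {V W : Type*} [AddCommGroup V] [Module ℝ V] [AddCommGroup W] [Module ℝ W]
    (S : Set V) (f : V → W) (hf : IsConvexLinearOn S f)
    {m n : ℕ} (a : Fin m → ℝ) (s : Fin m → V) (b : Fin n → ℝ) (t : Fin n → V)
    (hs : ∀ i, s i ∈ S) (ht : ∀ j, t j ∈ S)
    (ha : (∑ i, a i) = 1) (hb : (∑ j, b j) = 1)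
    (heq : (∑ i, a i • s i) = ∑ j, b j • t j) :
    (∑ i, a i • f (s i)) = ∑ j, b j • f (t j) := by
  classical
  set p : Fin m → ℝ := fun i => max (a i) 0 with hp
  set q : Fin m → ℝ := fun i => max (-a i) 0 with hq
  set r : Fin n → ℝ := fun j => max (b j) 0 with hr
  set u : Fin n → ℝ := fun j => max (-b j) 0 with hu
  have hpq : ∀ i, p i - q i = a i := fun i => max_zero_sub_max_neg_zero_eq_self (a i)
  have hru : ∀ j, r j - u j = b j := fun j => max_zero_sub_max_neg_zero_eq_self (b j)
  have hp0 : ∀ i, 0 ≤ p i := fun i => le_max_right _ _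
  have hq0 : ∀ i, 0 ≤ q i := fun i => le_max_right _ _
  have hr0 : ∀ j, 0 ≤ r j := fun j => le_max_right _ _
  have hu0 : ∀ j, 0 ≤ u j := fun j => le_max_right _ _
  set L : ℝ := (∑ i, p i) + (∑ j, u j) with hL
  have hsum_a : (∑ i, p i) - (∑ i, q i) = 1 := by
    rw [← Finset.sum_sub_distrib]; simp only [hpq]; exact ha
  have hsum_b : (∑ j, r j) - (∑ j, u j) = 1 := by
    rw [← Finset.sum_sub_distrib]; simp only [hru]; exact hb
  have hq0' : 0 ≤ ∑ i, q i := Finset.sum_nonneg fun i _ => hq0 i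
  have hu0' : 0 ≤ ∑ j, u j := Finset.sum_nonneg fun j _ => hu0 j
  have hLpos : 0 < L := by rw [hL]; linarith
  have hLne : L ≠ 0 := ne_of_gt hLpos
  have hL' : L = (∑ i, q i) + (∑ j, r j) := by rw [hL]; linarith
  set v : Fin (m + n) → V := Fin.append s t with hv
  set c : Fin (m + n) → ℝ := Fin.append (fun i => p i / L) (fun j => u j / L) with hc
  set d : Fin (m + n) → ℝ := Fin.append (fun i => q i / L) (fun j => r j / L) with hd
  have hvS : ∀ k, v k ∈ S := by
    refine Fin.addCases (fun i => ?_) (fun j => ?_)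
    · simpa [hv, Fin.append_left] using hs i
    · simpa [hv, Fin.append_right] using ht j
  have hc0 : ∀ k, 0 ≤ c k := by
    refine Fin.addCases (fun i => ?_) (fun j => ?_)
    · simp only [hc, Fin.append_left]; exact div_nonneg (hp0 i) hLpos.le
    · simp only [hc, Fin.append_right]; exact div_nonneg (hu0 j) hLpos.le
  have hd0 : ∀ k, 0 ≤ d k := by
    refine Fin.addCases (fun i => ?_) (fun j => ?_)
    · simp only [hd, Fin.append_left]; exact div_nonneg (hq0 i) hLpos.le
    · simp only [hd, Fin.append_right]; exact div_nonneg (hr0 j) hLpos.le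
  have hc1 : (∑ k, c k) = 1 := by
    rw [Fin.sum_univ_add]
    simp only [hc, Fin.append_left, Fin.append_right]
    rw [← Finset.sum_div, ← Finset.sum_div, ← add_div, ← hL, div_self hLne]
  have hd1 : (∑ k, d k) = 1 := by
    rw [Fin.sum_univ_add]
    simp only [hd, Fin.append_left, Fin.append_right]
    rw [← Finset.sum_div, ← Finset.sum_div, ← add_div, ← hL', div_self hLne]
  -- the common value of the two convex combinations
  have hkey : (∑ i, p i • s i) + (∑ j, u j • t j)
      = (∑ i, q i • s i) + (∑ j, r j • t j) := by
    have h1 : (∑ i, p i • s i) - (∑ i, q i • s i)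
        = (∑ j, r j • t j) - (∑ j, u j • t j) := by
      rw [← Finset.sum_sub_distrib, ← Finset.sum_sub_distrib]
      simp only [← sub_smul, hpq, hru]
      exact heq
    have := sub_eq_sub_iff_add_eq_add.mp h1
    linear_combination (norm := abel) this
  have hcv : (∑ k, c k • v k)
      = L⁻¹ • ((∑ i, p i • s i) + (∑ j, u j • t j)) := by
    rw [Fin.sum_univ_add]
    simp only [hc, hv, Fin.append_left, Fin.append_right, div_eq_inv_mul, mul_smul]
    rw [← Finset.smul_sum, ← Finset.smul_sum, ← smul_add]
  have hdv : (∑ k, d k • v k)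
      = L⁻¹ • ((∑ i, q i • s i) + (∑ j, r j • t j)) := by
    rw [Fin.sum_univ_add]
    simp only [hd, hv, Fin.append_left, Fin.append_right, div_eq_inv_mul, mul_smul]
    rw [← Finset.smul_sum, ← Finset.smul_sum, ← smul_add]
  have hvec : (∑ k, c k • v k) = ∑ k, d k • v k := by rw [hcv, hdv, hkey]
  have hfc := hf (m + n) c v hvS hc0 hc1
  have hfd := hf (m + n) d v hvS hd0 hd1
  have hfcd : (∑ k, c k • f (v k)) = ∑ k, d k • f (v k) := by
    rw [← hfc, ← hfd, hvec]
  have hcf : (∑ k, c k • f (v k))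
      = L⁻¹ • ((∑ i, p i • f (s i)) + (∑ j, u j • f (t j))) := by
    rw [Fin.sum_univ_add]
    simp only [hc, hv, Fin.append_left, Fin.append_right, div_eq_inv_mul, mul_smul]
    rw [← Finset.smul_sum, ← Finset.smul_sum, ← smul_add]
  have hdf : (∑ k, d k • f (v k))
      = L⁻¹ • ((∑ i, q i • f (s i)) + (∑ j, r j • f (t j))) := by
    rw [Fin.sum_univ_add]
    simp only [hd, hv, Fin.append_left, Fin.append_right, div_eq_inv_mul, mul_smul]
    rw [← Finset.smul_sum, ← Finset.smul_sum, ← smul_add]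
  rw [hcf, hdf] at hfcd
  have hW : (∑ i, p i • f (s i)) + (∑ j, u j • f (t j))
      = (∑ i, q i • f (s i)) + (∑ j, r j • f (t j)) := by
    have hne : L⁻¹ ≠ 0 := inv_ne_zero hLne
    exact smul_right_injective W hne hfcd
  have h2 : (∑ i, p i • f (s i)) - (∑ i, q i • f (s i))
      = (∑ j, r j • f (t j)) - (∑ j, u j • f (t j)) := by
    linear_combination (norm := abel) hW
  rw [← Finset.sum_sub_distrib, ← Finset.sum_sub_distrib] at h2
  simp only [← sub_smul, hpq, hru] at h2
  exact h2
end

section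
/- Let (Λ, ν) be a measure space and let A⃗, B⃗ : Λ → ℝ³, C : Λ → ℝ be measurable functions satisfying: (i) ∫ Bᵢ(λ)Aⱼ(λ) dν = δᵢⱼ for i, j ∈ {1,2,3}; (ii) ∫ C dν = 1; (iii) ‖B⃗(λ)‖ ≤ 1 for all λ; (iv) ‖A⃗(λ)‖ ≤ C(λ) for all λ. Then a contradiction follows; i.e., no such functions exist. -/
open MeasureTheory

/-- The analytic core of Spekkens's no-go theorem for a qubit: no measurable
`A⃗, B⃗ : Λ → ℝ³` and `C : Λ → ℝ` satisfy
`∫ Bᵢ Aⱼ dν = δᵢⱼ`, `∫ C dν = 1`, `‖B⃗‖ ≤ 1` and `‖A⃗‖ ≤ C` pointwise. -/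
theorem no_go_core
    {Λ : Type*} [MeasurableSpace Λ] (ν : Measure Λ)
    (A B : Λ → EuclideanSpace ℝ (Fin 3)) (C : Λ → ℝ)
    (hA : Measurable A) (hB : Measurable B) (hC : Measurable C)
    (hBA : ∀ i j : Fin 3,
      (∫ l, B l i * A l j ∂ν) = if i = j then (1 : ℝ) else 0)
    (hCint : (∫ l, C l ∂ν) = 1)
    (hBle : ∀ l, ‖B l‖ ≤ 1)
    (hAle : ∀ l, ‖A l‖ ≤ C l) :
    False := by
  -- each diagonal product is integrable, else its integral would be 0 ≠ 1
  have hdiag : ∀ i : Fin 3, Integrable (fun l => B l i * A l i) ν := by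
    intro i
    by_contra h
    have := hBA i i
    rw [integral_undef h] at this
    simp at this
  have hCint' : Integrable C ν := by
    by_contra h
    rw [integral_undef h] at hCint
    norm_num at hCint
  have hsum : (∫ l, (∑ i : Fin 3, B l i * A l i) ∂ν) = 3 := by
    rw [integral_finset_sum _ (fun i _ => hdiag i)]
    simp [hBA]
  have hle : ∀ l, (∑ i : Fin 3, B l i * A l i) ≤ C l := by
    intro l
    have h1 : (∑ i : Fin 3, B l i * A l i) = inner ℝ (B l) (A l) := by
      rw [PiLp.inner_apply]
      simp [RCLike.inner_apply, mul_comm]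
    have h2 : inner ℝ (B l) (A l) ≤ ‖B l‖ * ‖A l‖ := real_inner_le_norm _ _
    have h3 : ‖B l‖ * ‖A l‖ ≤ 1 * C l := by
      have h0 : (0:ℝ) ≤ ‖A l‖ := norm_nonneg _
      nlinarith [hBle l, hAle l]
    linarith [h1 ▸ h2]
  have hmono : (∫ l, (∑ i : Fin 3, B l i * A l i) ∂ν) ≤ ∫ l, C l ∂ν :=
    integral_mono (integrable_finset_sum _ (fun i _ => hdiag i)) hCint' hle
  rw [hsum, hCint] at hmono
  norm_num at hmono
end
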